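/- Assume that for each T > 0 and t ≥ T the map (ξ₁,ξ₂) ↦ l(t−T,t,ξ₁,ξ₂,u) is twice continuously differentiable. If there exists T > 0 such that for every t ≥ T there exists R_t > 0 with d²_{ξ₂}l(t−T,t,ξ₁,ξ₂,u) positive definite for all (ξ₁,ξ₂) ∈ B̄(x(t−T),R_t)², then u is weakly persistent at x₀. -/

import Mathlib

open MeasureTheory Metric Set Filter

/-- State space `ℝ^n` with the Euclidean norm. -/
abbrev Vec (n : ℕ) := EuclideanSpace ℝ (Fin n)

/-- Cumulative output error
`l(t₁,t₂,ξ₁,ξ₂,u) = ∫_{t₁}^{t₂} ‖h(φ(s;t₁,ξ₁,u),u(s)) − h(φ(s;t₁,ξ₂,u),u(s))‖² ds`. -/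
noncomputable def cumError {nx nu ny : ℕ}
    (h : Vec nx → Vec nu → Vec ny) (φ : ℝ → ℝ → Vec nx → Vec nx)
    (u : ℝ → Vec nu) (t₁ t₂ : ℝ) (ξ₁ ξ₂ : Vec nx) : ℝ :=
  ∫ s in t₁..t₂, ‖h (φ s t₁ ξ₁) (u s) - h (φ s t₁ ξ₂) (u s)‖ ^ 2

/-- A `𝒦`-function: continuous, strictly increasing on `[0,∞)`, vanishing at `0`. -/
def IsKFunction (κ : ℝ → ℝ) : Prop :=
  ContinuousOn κ (Set.Ici 0) ∧ StrictMonoOn κ (Set.Ici 0) ∧ κ 0 = 0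

/-- Weakly persistent input trajectory at `x₀`. -/
def WeaklyPersistentAt {nx nu ny : ℕ}
    (h : Vec nx → Vec nu → Vec ny) (φ : ℝ → ℝ → Vec nx → Vec nx)
    (u : ℝ → Vec nu) (x₀ : Vec nx) : Prop :=
  ∃ T > (0 : ℝ), ∀ t ≥ T, ∃ R > (0 : ℝ), ∃ κ : ℝ → ℝ, IsKFunction κ ∧
    ∀ ξ₁ ∈ Metric.closedBall (φ (t - T) 0 x₀) R,
      ∀ ξ₂ ∈ Metric.closedBall (φ (t - T) 0 x₀) R,
        κ ‖ξ₁ - ξ₂‖ ≤ cumError h φ u (t - T) t ξ₁ ξ₂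

/-- Second Fréchet derivative of `ξ ↦ l(t₁,t₂,ξ₁,ξ,u)` at `ξ₂`, as a bilinear form. -/
noncomputable def d2l {nx nu ny : ℕ}
    (h : Vec nx → Vec nu → Vec ny) (φ : ℝ → ℝ → Vec nx → Vec nx)
    (u : ℝ → Vec nu) (t₁ t₂ : ℝ) (ξ₁ ξ₂ v w : Vec nx) : ℝ :=
  iteratedFDeriv ℝ 2 (fun ξ => cumError h φ u t₁ t₂ ξ₁ ξ) ξ₂ ![v, w]

lemma cumError_nonneg {nx nu ny : ℕ}
    (h : Vec nx → Vec nu → Vec ny) (φ : ℝ → ℝ → Vec nx → Vec nx)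
    (u : ℝ → Vec nu) {t₁ t₂ : ℝ} (hle : t₁ ≤ t₂) (ξ₁ ξ₂ : Vec nx) :
    0 ≤ cumError h φ u t₁ t₂ ξ₁ ξ₂ := by
  unfold cumError
  exact intervalIntegral.integral_nonneg hle (fun s _ => by positivity)

lemma cumError_self {nx nu ny : ℕ}
    (h : Vec nx → Vec nu → Vec ny) (φ : ℝ → ℝ → Vec nx → Vec nx)
    (u : ℝ → Vec nu) (t₁ t₂ : ℝ) (ξ : Vec nx) :
    cumError h φ u t₁ t₂ ξ ξ = 0 := by
  unfold cumError
  simp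

lemma pos_of_posdef {n : ℕ} (F : Vec n → ℝ) (hF : ContDiff ℝ 2 F)
    (S : Set (Vec n)) (hS : Convex ℝ S) {x y : Vec n} (hx : x ∈ S) (hy : y ∈ S)
    (hne : x ≠ y) (hF0 : F x = 0) (hFnn : ∀ ξ, 0 ≤ F ξ)
    (hhess : ∀ ξ ∈ S, ∀ v : Vec n, v ≠ 0 → 0 < fderiv ℝ (fderiv ℝ F) ξ v v) :
    0 < F y := by
  set v := y - x with hv
  have hvne : v ≠ 0 := sub_ne_zero.2 (Ne.symm hne)
  set c : ℝ → Vec n := fun s => x + s • v with hc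
  have hcmem : ∀ s ∈ Icc (0:ℝ) 1, c s ∈ S := by
    intro s hs
    have h1 : (1 - s) • x + s • y ∈ S := hS hx hy (by linarith [hs.2]) hs.1 (by ring)
    have h2 : c s = (1 - s) • x + s • y := by
      simp only [hc, hv, smul_sub, sub_smul, one_smul]; abel
    rw [h2]; exact h1
  have hcderiv : ∀ s : ℝ, HasDerivAt c v s := by
    intro s
    simpa [hc] using ((hasDerivAt_id s).smul_const v).const_add x
  have hFdiff : Differentiable ℝ F := hF.differentiable (by norm_num)
  have hF'cd : ContDiff ℝ 1 (fderiv ℝ F) := hF.fderiv_right (by norm_num)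
  have hF'diff : Differentiable ℝ (fderiv ℝ F) := hF'cd.differentiable (by norm_num)
  set G : ℝ → ℝ := fun s => F (c s) with hG
  set G' : ℝ → ℝ := fun s => fderiv ℝ F (c s) v with hG'
  have hGd : ∀ s : ℝ, HasDerivAt G (G' s) s := fun s =>
    (hFdiff (c s)).hasFDerivAt.comp_hasDerivAt s (hcderiv s)
  have hG'd : ∀ s : ℝ, HasDerivAt G' (fderiv ℝ (fderiv ℝ F) (c s) v v) s := by
    intro s
    have h1 : HasDerivAt (fun s => fderiv ℝ F (c s)) (fderiv ℝ (fderiv ℝ F) (c s) v) s :=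
      (hF'diff (c s)).hasFDerivAt.comp_hasDerivAt s (hcderiv s)
    simpa [hG'] using h1.clm_apply (hasDerivAt_const s v)
  have hmin : IsLocalMin F x := Filter.Eventually.of_forall (fun ξ => by
    rw [hF0]; exact hFnn ξ)
  have hfd0 : fderiv ℝ F x = 0 := hmin.fderiv_eq_zero
  have hG'0 : G' 0 = 0 := by simp [hG', hc, hfd0]
  have hG'mono : StrictMonoOn G' (Icc (0:ℝ) 1) := by
    apply strictMonoOn_of_deriv_pos (convex_Icc 0 1)
    · exact fun s _ => (hG'd s).continuousAt.continuousWithinAt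
    · intro s hs
      rw [interior_Icc] at hs
      rw [(hG'd s).deriv]
      exact hhess (c s) (hcmem s ⟨hs.1.le, hs.2.le⟩) v hvne
  have hG'pos : ∀ s ∈ Ioo (0:ℝ) 1, 0 < G' s := by
    intro s hs
    have := hG'mono (left_mem_Icc.2 zero_le_one) ⟨hs.1.le, hs.2.le⟩ hs.1
    rwa [hG'0] at this
  have hGmono : StrictMonoOn G (Icc (0:ℝ) 1) := by
    apply strictMonoOn_of_deriv_pos (convex_Icc 0 1)
    · exact fun s _ => (hGd s).continuousAt.continuousWithinAt
    · intro s hs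
      rw [interior_Icc] at hs
      rw [(hGd s).deriv]
      exact hG'pos s hs
  have hlt : G 0 < G 1 := hGmono (left_mem_Icc.2 zero_le_one) (right_mem_Icc.2 zero_le_one) one_pos
  have hG0 : G 0 = 0 := by simp [hG, hc, hF0]
  have hG1 : G 1 = F y := by simp [hG, hc, hv]
  rw [hG0, hG1] at hlt
  exact hlt

set_option maxHeartbeats 1000000 in
/-- positive definiteness of the Hessian of the MHE cost on a
neighbourhood of `x(t−T)` implies weak persistence of `u` at `x₀`. -/
theorem stmt4 {nx nu ny : ℕ}
    (f : Vec nx → Vec nu → Vec nx) (h : Vec nx → Vec nu → Vec ny)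
    (u : ℝ → Vec nu) (φ : ℝ → ℝ → Vec nx → Vec nx) (x₀ : Vec nx)
    (hf : ContDiff ℝ 2 (Function.uncurry f))
    (hh : ContDiff ℝ 2 (Function.uncurry h))
    (hflow_init : ∀ s₁ : ℝ, 0 ≤ s₁ → ∀ ξ, φ s₁ s₁ ξ = ξ)
    (hflow_ode : ∀ s₁ s : ℝ, 0 ≤ s₁ → s₁ ≤ s → ∀ ξ,
      HasDerivAt (fun τ => φ τ s₁ ξ) (f (φ s s₁ ξ) (u s)) s)
    (hC2 : ∀ T > (0 : ℝ), ∀ t ≥ T,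
      ContDiff ℝ 2 (fun p : Vec nx × Vec nx => cumError h φ u (t - T) t p.1 p.2))
    (hpos : ∃ T > (0 : ℝ), ∀ t ≥ T, ∃ R > (0 : ℝ),
      ∀ ξ₁ ∈ Metric.closedBall (φ (t - T) 0 x₀) R,
        ∀ ξ₂ ∈ Metric.closedBall (φ (t - T) 0 x₀) R,
          ∀ v : Vec nx, v ≠ 0 → 0 < d2l h φ u (t - T) t ξ₁ ξ₂ v v) :
    WeaklyPersistentAt h φ u x₀ := by
  obtain ⟨T, hT, hposT⟩ := hpos
  refine ⟨T, hT, fun t ht => ?_⟩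
  obtain ⟨R, hR, hHess⟩ := hposT t ht
  have hR2 : (0:ℝ) < 2 * R := by linarith
  set z := φ (t - T) 0 x₀ with hz
  have hle : t - T ≤ t := by linarith
  obtain ⟨L, hL⟩ : ∃ L : Vec nx × Vec nx → ℝ,
      L = fun p : Vec nx × Vec nx => cumError h φ u (t - T) t p.1 p.2 := ⟨_, rfl⟩
  have hLC2 : ContDiff ℝ 2 L := by rw [hL]; exact hC2 T hT t ht
  have hLcont : Continuous L := hLC2.continuous
  have hLnn : ∀ p : Vec nx × Vec nx, 0 ≤ L p := fun p => by
    simp only [hL]; exact cumError_nonneg h φ u hle p.1 p.2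
  have hLself : ∀ ξ : Vec nx, L (ξ, ξ) = 0 := fun ξ => by
    simp only [hL]; exact cumError_self h φ u (t - T) t ξ
  have hLpos : ∀ ξ₁ ∈ closedBall z R, ∀ ξ₂ ∈ closedBall z R, ξ₁ ≠ ξ₂ →
      0 < L (ξ₁, ξ₂) := by
    intro ξ₁ h1 ξ₂ h2 hne
    have hFc2 : ContDiff ℝ 2 (fun ξ => L (ξ₁, ξ)) :=
      hLC2.comp (contDiff_const.prodMk contDiff_id)
    simp only [hL] at hFc2 ⊢
    refine pos_of_posdef (fun ξ => cumError h φ u (t - T) t ξ₁ ξ) hFc2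
      (closedBall z R) (convex_closedBall z R) h1 h2 hne
      (cumError_self h φ u (t - T) t ξ₁)
      (fun ξ => cumError_nonneg h φ u hle ξ₁ ξ) ?_
    intro ξ hξ v hv
    have hd := hHess ξ₁ h1 ξ hξ v hv
    rw [d2l, iteratedFDeriv_two_apply] at hd
    simpa using hd
  rcases subsingleton_or_nontrivial (Vec nx) with hsub | hnt
  · refine ⟨R, hR, id, ⟨continuous_id.continuousOn, fun a _ b _ hab => hab, rfl⟩, ?_⟩
    intro ξ₁ _ ξ₂ _
    have hEq : ξ₁ = ξ₂ := Subsingleton.elim _ _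
    simpa [hEq] using cumError_nonneg h φ u hle ξ₂ ξ₂
  · obtain ⟨e, he⟩ := exists_norm_eq (Vec nx) (zero_le_one)
    set K : ℝ → Set (Vec nx × Vec nx) := fun r =>
      (closedBall z R ×ˢ closedBall z R) ∩ {p | r ≤ ‖p.1 - p.2‖} with hK
    have hKcompact : ∀ r, IsCompact (K r) := fun r =>
      ((isCompact_closedBall z R).prod (isCompact_closedBall z R)).inter_right
        (isClosed_le continuous_const ((continuous_fst.sub continuous_snd).norm))
    have hKne : ∀ r, 0 < r → r ≤ 2 * R → (K r).Nonempty := by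
      intro r hr hr2
      refine ⟨(z + (r/2) • e, z - (r/2) • e), ⟨⟨?_, ?_⟩, ?_⟩⟩
      · rw [mem_closedBall_iff_norm]
        have : z + (r/2) • e - z = (r/2) • e := by abel
        rw [this, norm_smul, he, mul_one, Real.norm_eq_abs,
          abs_of_nonneg (by positivity : (0:ℝ) ≤ r/2)]
        linarith
      · rw [mem_closedBall_iff_norm]
        have : z - (r/2) • e - z = -((r/2) • e) := by abel
        rw [this, norm_neg, norm_smul, he, mul_one, Real.norm_eq_abs,
          abs_of_nonneg (by positivity : (0:ℝ) ≤ r/2)]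
        linarith
      · show r ≤ ‖(z + (r/2) • e) - (z - (r/2) • e)‖
        have : (z + (r/2) • e) - (z - (r/2) • e) = r • e := by
          rw [show (r:ℝ) • e = (r/2) • e + (r/2) • e by rw [← add_smul]; ring_nf]
          abel
        rw [this, norm_smul, he, mul_one, Real.norm_eq_abs, abs_of_nonneg hr.le]
    set m : ℝ → ℝ := fun r => sInf (L '' K r) with hm
    have hbdd : ∀ r, BddBelow (L '' K r) := by
      intro r
      refine ⟨0, ?_⟩
      rintro x ⟨p, _, rfl⟩
      exact hLnn p
    have hm_le : ∀ r, ∀ p ∈ K r, m r ≤ L p := fun r p hp =>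
      csInf_le (hbdd r) (mem_image_of_mem _ hp)
    have hm_nonneg : ∀ r, 0 < r → r ≤ 2 * R → 0 ≤ m r := by
      intro r hr hr2
      refine le_csInf ((hKne r hr hr2).image L) ?_
      rintro b ⟨p, _, rfl⟩
      exact hLnn p
    have hm_pos : ∀ r, 0 < r → r ≤ 2 * R → 0 < m r := by
      intro r hr hr2
      obtain ⟨p₀, hp₀, hmin⟩ := (hKcompact r).exists_isMinOn (hKne r hr hr2)
        hLcont.continuousOn
      have hne : p₀.1 ≠ p₀.2 := by
        intro hEq
        have := hp₀.2
        rw [mem_setOf_eq, hEq, sub_self, norm_zero] at this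
        linarith
      have h0 : 0 < L p₀ := hLpos p₀.1 hp₀.1.1 p₀.2 hp₀.1.2 hne
      have : L p₀ ≤ m r := by
        refine le_csInf ((hKne r hr hr2).image L) ?_
        rintro b ⟨p, hp, rfl⟩
        exact hmin hp
      linarith
    have hm_mono : ∀ s₁ s₂, 0 < s₁ → s₁ ≤ s₂ → s₂ ≤ 2 * R → m s₁ ≤ m s₂ := by
      intro s₁ s₂ h1 h12 h2
      refine csInf_le_csInf (hbdd s₁) ((hKne s₂ (lt_of_lt_of_le h1 h12) h2).image L)
        (image_mono (f := L) ?_)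
      intro p hp
      exact ⟨hp.1, le_trans h12 hp.2⟩
    set M : ℝ → ℝ := fun s => if s ≤ 0 then 0 else min (m (min s (2*R)) / (2*R)) s
      with hM
    have hmin_mem : ∀ s : ℝ, 0 < s → 0 < min s (2*R) ∧ min s (2*R) ≤ 2*R :=
      fun s hs => ⟨lt_min hs hR2, min_le_right _ _⟩
    have hM_nonneg : ∀ s, 0 ≤ M s := by
      intro s
      by_cases hs : s ≤ 0
      · simp [hM, hs]
      · push_neg at hs
        rw [hM]
        simp only [if_neg (not_le.2 hs)]
        exact le_min (div_nonneg (hm_nonneg _ (hmin_mem s hs).1 (hmin_mem s hs).2) hR2.le)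
          hs.le
    have hM_pos : ∀ s, 0 < s → 0 < M s := by
      intro s hs
      rw [hM]
      simp only [if_neg (not_le.2 hs)]
      exact lt_min (div_pos (hm_pos _ (hmin_mem s hs).1 (hmin_mem s hs).2) hR2) hs
    have hM_mono : Monotone M := by
      intro a b hab
      by_cases hb : b ≤ 0
      · have ha : a ≤ 0 := le_trans hab hb
        simp [hM, ha, hb]
      · push_neg at hb
        by_cases ha : a ≤ 0
        · rw [show M a = 0 by simp [hM, ha]]
          exact hM_nonneg b
        · push_neg at ha
          rw [hM]
          simp only [if_neg (not_le.2 ha), if_neg (not_le.2 hb)]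
          refine min_le_min ?_ hab
          have hmm : m (min a (2*R)) ≤ m (min b (2*R)) :=
            hm_mono _ _ (hmin_mem a ha).1 (min_le_min hab le_rfl) (hmin_mem b hb).2
          exact (div_le_div_iff_of_pos_right hR2).2 hmm
    have hMint : ∀ a b : ℝ, IntervalIntegrable M volume a b := fun a b =>
      hM_mono.intervalIntegrable
    set κ : ℝ → ℝ := fun r => ∫ s in (0:ℝ)..r, M s with hκ
    have hκcont : Continuous κ := intervalIntegral.continuous_primitive hMint 0
    have hκ0 : κ 0 = 0 := intervalIntegral.integral_same
    have hκmono : StrictMonoOn κ (Ici 0) := by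
      intro r₁ h1 r₂ h2 h12
      have h1' : (0:ℝ) ≤ r₁ := h1
      set c := (r₁ + r₂) / 2 with hcdef
      have hc1 : r₁ < c := by rw [hcdef]; linarith
      have hc2 : c < r₂ := by rw [hcdef]; linarith
      have hc0 : 0 < c := by rw [hcdef]; linarith
      have key : κ r₂ - κ r₁ = ∫ s in r₁..r₂, M s :=
        intervalIntegral.integral_interval_sub_left (hMint 0 r₂) (hMint 0 r₁)
      have split : (∫ s in r₁..r₂, M s) = (∫ s in r₁..c, M s) + ∫ s in c..r₂, M s :=
        (intervalIntegral.integral_add_adjacent_intervals (hMint r₁ c) (hMint c r₂)).symm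
      have hpart1 : 0 ≤ ∫ s in r₁..c, M s :=
        intervalIntegral.integral_nonneg hc1.le (fun s _ => hM_nonneg s)
      have hpart2 : (r₂ - c) * M c ≤ ∫ s in c..r₂, M s := by
        have := intervalIntegral.integral_mono_on (f := fun _ => M c) (g := M) hc2.le
          intervalIntegrable_const (hMint c r₂) (fun s hs => hM_mono hs.1)
        simpa [smul_eq_mul] using this
      have hMc : 0 < M c := hM_pos c hc0
      have : 0 < κ r₂ - κ r₁ := by
        rw [key, split]
        have : 0 < (r₂ - c) * M c := mul_pos (by linarith) hMc
        linarith
      linarith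
    refine ⟨R, hR, κ, ⟨hκcont.continuousOn, hκmono, hκ0⟩, ?_⟩
    intro ξ₁ h1 ξ₂ h2
    rcases eq_or_ne ξ₁ ξ₂ with hEq | hne
    · simpa [hEq, hκ0] using cumError_nonneg h φ u hle ξ₂ ξ₂
    · set r := ‖ξ₁ - ξ₂‖ with hrdef
      have hr : 0 < r := norm_pos_iff.2 (sub_ne_zero.2 hne)
      have hr2 : r ≤ 2 * R := by
        have e1 : dist ξ₁ z ≤ R := mem_closedBall.1 h1
        have e2 : dist ξ₂ z ≤ R := mem_closedBall.1 h2
        calc r = dist ξ₁ ξ₂ := (dist_eq_norm _ _).symm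
          _ ≤ dist ξ₁ z + dist z ξ₂ := dist_triangle _ _ _
          _ ≤ R + R := add_le_add e1 (by rwa [dist_comm])
          _ = 2 * R := by ring
      have step1 : κ r ≤ r * M r := by
        have := intervalIntegral.integral_mono_on (f := M) (g := fun _ => M r) hr.le
          (hMint 0 r) intervalIntegrable_const (fun s hs => hM_mono hs.2)
        simpa [smul_eq_mul, mul_comm] using this
      have step2 : M r ≤ m r / (2*R) := by
        rw [hM]
        simp only [if_neg (not_le.2 hr), min_eq_left hr2]
        exact min_le_left _ _
      have step3 : r * (m r / (2*R)) ≤ m r := by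
        have hdr : r / (2*R) ≤ 1 := (div_le_one hR2).2 hr2
        have hmnn : 0 ≤ m r := hm_nonneg r hr hr2
        have : r * (m r / (2*R)) = (r / (2*R)) * m r := by ring
        rw [this]
        nlinarith
      have step4 : m r ≤ L (ξ₁, ξ₂) := hm_le r (ξ₁, ξ₂) ⟨⟨h1, h2⟩, hrdef.le⟩
      simp only [hL] at step4
      calc κ r ≤ r * M r := step1
        _ ≤ r * (m r / (2*R)) := mul_le_mul_of_nonneg_left step2 hr.le
        _ ≤ m r := step3
        _ ≤ cumError h φ u (t - T) t ξ₁ ξ₂ := step4
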